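/- Let P be a reversible irreducible Markov kernel on a finite state space χ with stationary distribution π (π(x) > 0 for all x). Let G be the graph with edge set E = {(x,y) : P(x,y) > 0}, and for each ordered pair x ≠ y choose a path γ_{xy} in G from x to y using each edge at most once. Set κ = max over edges e of Q(e)⁻¹·∑_{γ_{xy} ∋ e} |γ_{xy}|·π(x)·π(y), where Q(x,y) = π(x)·P(x,y). Then the second-largest eigenvalue β₁ of P satisfies β₁ ≤ 1 - 1/κ. -/

import Mathlib

open Finset

lemma telescope_sum {χ : Type*} (φ : χ → ℝ) :
    ∀ (L : List (χ × χ)) (x y : χ), L ≠ [] →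
      L.head?.map Prod.fst = some x → L.getLast?.map Prod.snd = some y →
      List.Chain' (fun e f => e.2 = f.1) L →
      (L.map (fun e => φ e.2 - φ e.1)).sum = φ y - φ x
  | [], x, y, h, _, _, _ => absurd rfl h
  | [e], x, y, _, h1, h2, _ => by
      simp only [List.head?, Option.map_some, Option.some.injEq] at h1
      simp only [List.getLast?, Option.map_some, Option.some.injEq] at h2
      simp [← h1, ← h2]
  | e :: f :: L, x, y, _, h1, h2, hc => by
      simp only [List.head?, Option.map_some, Option.some.injEq] at h1
      simp only [List.Chain', List.isChain_cons_cons] at hc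
      have ih := telescope_sum φ (f :: L) e.2 y (by simp)
        (by simp [hc.1]) (by rw [← h2]; simp [List.getLast?_cons_cons]) hc.2
      simp only [List.map_cons, List.sum_cons] at ih ⊢
      rw [ih, ← h1]; ring

lemma sum4_comm {α : Type*} [Fintype α] (F : α → α → α → α → ℝ) :
    ∑ x, ∑ y, ∑ a, ∑ b, F x y a b = ∑ a, ∑ b, ∑ x, ∑ y, F x y a b := by
  have h1 : ∀ x, ∑ y, ∑ a, ∑ b, F x y a b = ∑ a, ∑ b, ∑ y, F x y a b := by
    intro x
    rw [Finset.sum_comm]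
    exact Finset.sum_congr rfl fun a _ => Finset.sum_comm
  simp only [h1]
  rw [Finset.sum_comm]
  exact Finset.sum_congr rfl fun a _ => Finset.sum_comm

/-- A finite list of directed edges forms a path from `x` to `y` in the graph of
positive transitions of `P`, using each edge at most once. -/
def IsEdgePath {χ : Type*} (P : χ → χ → ℝ) (x y : χ) (L : List (χ × χ)) : Prop :=
  L ≠ [] ∧
  L.head?.map Prod.fst = some x ∧
  L.getLast?.map Prod.snd = some y ∧
  List.Chain' (fun e f => e.2 = f.1) L ∧
  (∀ e ∈ L, 0 < P e.1 e.2) ∧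
  L.Nodup

/-- Diaconis–Stroock geometric (Poincaré) bound: for a reversible irreducible Markov
kernel `P` on a finite state space with stationary distribution `π` of full support,
and a choice of paths `γ_{xy}` between any two distinct states, if
`κ ≥ Q(e)⁻¹ ∑_{γ_{xy} ∋ e} |γ_{xy}| π(x) π(y)` for every edge `e` (with
`Q(a,b) = π(a) P(a,b)`), then every eigenvalue `μ ≠ 1` of `P` — in particular the
second largest eigenvalue `β₁` — satisfies `μ ≤ 1 - 1/κ`. -/
theorem diaconis_stroock_geometric_bound
    {χ : Type*} [Fintype χ] [DecidableEq χ] [Nonempty χ]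
    (P : χ → χ → ℝ) (π : χ → ℝ)
    (hPnonneg : ∀ x y, 0 ≤ P x y)
    (hProw : ∀ x, ∑ y, P x y = 1)
    (hπpos : ∀ x, 0 < π x)
    (hπsum : ∑ x, π x = 1)
    (hrev : ∀ x y, π x * P x y = π y * P y x)
    (hirr : ∀ x y : χ, ∃ k : ℕ, 0 < ((Matrix.of P) ^ k) x y)
    (γ : χ → χ → List (χ × χ))
    (hγ : ∀ x y : χ, x ≠ y → IsEdgePath P x y (γ x y))
    (κ : ℝ) (hκpos : 0 < κ)
    (hκ : ∀ a b : χ, 0 < P a b →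
      (π a * P a b)⁻¹ *
          ∑ x : χ, ∑ y : χ,
            (if x ≠ y ∧ (a, b) ∈ γ x y then ((γ x y).length : ℝ) * π x * π y else 0)
        ≤ κ) :
    ∀ μ : ℝ, Module.End.HasEigenvalue (Matrix.toLin' (Matrix.of P)) μ → μ ≠ 1 →
      μ ≤ 1 - 1 / κ := by
  intro μ hμ hμ1
  obtain ⟨φ, hφvec⟩ := hμ.exists_hasEigenvector
  have hφ0 : φ ≠ 0 := hφvec.right
  have hPφ : ∀ x, ∑ y, P x y * φ y = μ * φ x := by
    intro x
    have h := hφvec.apply_eq_smul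
    have := congrFun h x
    simpa [Matrix.toLin'_apply, Matrix.mulVec, dotProduct] using this
  set N : ℝ := ∑ x, π x * φ x ^ 2 with hN
  set S : ℝ := ∑ x, π x * φ x with hSdef
  -- column sums
  have hcol : ∀ y, ∑ x, π x * P x y = π y := by
    intro y
    calc ∑ x, π x * P x y = ∑ x, π y * P y x := by
          exact Finset.sum_congr rfl fun x _ => hrev x y
      _ = π y * ∑ x, P y x := by rw [Finset.mul_sum]
      _ = π y := by rw [hProw, mul_one]
  -- S = 0
  have hS : S = 0 := by
    have h1 : μ * S = S := by
      calc μ * S = ∑ x, π x * (μ * φ x) := by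
            rw [Finset.mul_sum]; exact Finset.sum_congr rfl fun x _ => by ring
        _ = ∑ x, π x * ∑ y, P x y * φ y := by
            exact Finset.sum_congr rfl fun x _ => by rw [hPφ]
        _ = ∑ x, ∑ y, π x * P x y * φ y := by
            exact Finset.sum_congr rfl fun x _ => by rw [Finset.mul_sum]; exact Finset.sum_congr rfl fun y _ => by ring
        _ = ∑ y, ∑ x, π x * P x y * φ y := Finset.sum_comm
        _ = ∑ y, (∑ x, π x * P x y) * φ y := by
            exact Finset.sum_congr rfl fun y _ => by rw [Finset.sum_mul]
        _ = S := by exact Finset.sum_congr rfl fun y _ => by rw [hcol]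
    have : (μ - 1) * S = 0 := by linarith [h1]
    rcases mul_eq_zero.mp this with h | h
    · exact absurd (by linarith : μ = 1) hμ1
    · exact h
  -- Dirichlet form identity
  have hB : ∑ x, ∑ y, π x * P x y * (φ x * φ y) = μ * N := by
    calc ∑ x, ∑ y, π x * P x y * (φ x * φ y)
        = ∑ x, π x * φ x * ∑ y, P x y * φ y := by
          exact Finset.sum_congr rfl fun x _ => by rw [Finset.mul_sum]; exact Finset.sum_congr rfl fun y _ => by ring
      _ = ∑ x, π x * φ x * (μ * φ x) := by exact Finset.sum_congr rfl fun x _ => by rw [hPφ]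
      _ = μ * N := by rw [hN, Finset.mul_sum]; exact Finset.sum_congr rfl fun x _ => by ring
  have hA : ∑ x, ∑ y, π x * P x y * φ x ^ 2 = N := by
    calc ∑ x, ∑ y, π x * P x y * φ x ^ 2
        = ∑ x, π x * φ x ^ 2 * ∑ y, P x y := by
          exact Finset.sum_congr rfl fun x _ => by rw [Finset.mul_sum]; exact Finset.sum_congr rfl fun y _ => by ring
      _ = N := by exact Finset.sum_congr rfl fun x _ => by rw [hProw, mul_one]
  have hC : ∑ x, ∑ y, π x * P x y * φ y ^ 2 = N := by
    calc ∑ x, ∑ y, π x * P x y * φ y ^ 2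
        = ∑ y, ∑ x, π x * P x y * φ y ^ 2 := Finset.sum_comm
      _ = ∑ y, (∑ x, π x * P x y) * φ y ^ 2 := by
          exact Finset.sum_congr rfl fun y _ => by rw [Finset.sum_mul]
      _ = N := by exact Finset.sum_congr rfl fun y _ => by rw [hcol]
  have hE : ∑ x, ∑ y, π x * P x y * (φ x - φ y) ^ 2 = 2 * (1 - μ) * N := by
    have expand : ∀ x y : χ, π x * P x y * (φ x - φ y) ^ 2
        = π x * P x y * φ x ^ 2 - 2 * (π x * P x y * (φ x * φ y)) + π x * P x y * φ y ^ 2 :=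
      fun x y => by ring
    calc ∑ x, ∑ y, π x * P x y * (φ x - φ y) ^ 2
        = ∑ x, ∑ y, (π x * P x y * φ x ^ 2 - 2 * (π x * P x y * (φ x * φ y)) + π x * P x y * φ y ^ 2) := by
          exact Finset.sum_congr rfl fun x _ => Finset.sum_congr rfl fun y _ => expand x y
      _ = (∑ x, ∑ y, π x * P x y * φ x ^ 2) - 2 * (∑ x, ∑ y, π x * P x y * (φ x * φ y))
            + ∑ x, ∑ y, π x * P x y * φ y ^ 2 := by
          simp only [Finset.sum_add_distrib, Finset.sum_sub_distrib, Finset.mul_sum]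
      _ = N - 2 * (μ * N) + N := by rw [hA, hB, hC]
      _ = 2 * (1 - μ) * N := by ring
  -- Variance identity
  have hsum1 : ∑ x, ∑ y, π y * (π x * φ x ^ 2) = N := by
    have h : ∀ x : χ, ∑ y, π y * (π x * φ x ^ 2) = π x * φ x ^ 2 := fun x => by
      rw [← Finset.sum_mul, hπsum, one_mul]
    simp only [h]
    exact hN.symm
  have hsum2 : ∑ x, ∑ y, (π x * φ x) * (π y * φ y) = S * S := by
    have h : ∀ x : χ, ∑ y, (π x * φ x) * (π y * φ y) = (π x * φ x) * S := fun x => by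
      rw [← Finset.mul_sum]
    simp only [h]
    rw [← Finset.sum_mul]
  have hsum3 : ∑ x, ∑ y, π x * (π y * φ y ^ 2) = N := by
    have h : ∀ x : χ, ∑ y, π x * (π y * φ y ^ 2) = π x * N := fun x => by
      rw [← Finset.mul_sum]
    simp only [h]
    rw [← Finset.sum_mul, hπsum, one_mul]
  have hV : ∑ x, ∑ y, π x * π y * (φ x - φ y) ^ 2 = 2 * N := by
    have expand : ∀ x y : χ, π x * π y * (φ x - φ y) ^ 2
        = π y * (π x * φ x ^ 2) - 2 * ((π x * φ x) * (π y * φ y)) + π x * (π y * φ y ^ 2) :=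
      fun x y => by ring
    calc ∑ x, ∑ y, π x * π y * (φ x - φ y) ^ 2
        = ∑ x, ∑ y, (π y * (π x * φ x ^ 2) - 2 * ((π x * φ x) * (π y * φ y)) + π x * (π y * φ y ^ 2)) :=
          Finset.sum_congr rfl fun x _ => Finset.sum_congr rfl fun y _ => expand x y
      _ = (∑ x, ∑ y, π y * (π x * φ x ^ 2)) - 2 * (∑ x, ∑ y, (π x * φ x) * (π y * φ y))
            + ∑ x, ∑ y, π x * (π y * φ y ^ 2) := by
          simp only [Finset.sum_add_distrib, Finset.sum_sub_distrib, Finset.mul_sum]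
      _ = N - 2 * (S * S) + N := by rw [hsum1, hsum2, hsum3]
      _ = 2 * N := by rw [hS]; ring
  -- per-pair Cauchy-Schwarz bound
  have key : ∀ x y : χ, π x * π y * (φ x - φ y) ^ 2
      ≤ ∑ a, ∑ b, (if x ≠ y ∧ (a, b) ∈ γ x y then
          ((γ x y).length : ℝ) * π x * π y * (φ b - φ a) ^ 2 else 0) := by
    intro x y
    by_cases hxy : x = y
    · subst hxy
      simp only [ne_eq, not_true_eq_false, false_and, if_false, Finset.sum_const_zero]
      simp
    · obtain ⟨hne, hhead, hlast, hchain, hpos, hnodup⟩ := hγ x y hxy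
      have htel := telescope_sum φ (γ x y) x y hne hhead hlast hchain
      have hCS : (φ y - φ x) ^ 2
          ≤ ((γ x y).length : ℝ) * ∑ e ∈ (γ x y).toFinset, (φ e.2 - φ e.1) ^ 2 := by
        have h1 : ∑ e ∈ (γ x y).toFinset, (φ e.2 - φ e.1) = φ y - φ x := by
          rw [List.sum_toFinset _ hnodup, htel]
        calc (φ y - φ x) ^ 2 = (∑ e ∈ (γ x y).toFinset, (φ e.2 - φ e.1)) ^ 2 := by rw [h1]
          _ ≤ (γ x y).toFinset.card * ∑ e ∈ (γ x y).toFinset, (φ e.2 - φ e.1) ^ 2 :=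
              sq_sum_le_card_mul_sum_sq
          _ = ((γ x y).length : ℝ) * ∑ e ∈ (γ x y).toFinset, (φ e.2 - φ e.1) ^ 2 := by
              rw [List.toFinset_card_of_nodup hnodup]
      have hππ : (0:ℝ) ≤ π x * π y := le_of_lt (mul_pos (hπpos x) (hπpos y))
      calc π x * π y * (φ x - φ y) ^ 2
          = π x * π y * (φ y - φ x) ^ 2 := by ring
        _ ≤ π x * π y * (((γ x y).length : ℝ) * ∑ e ∈ (γ x y).toFinset, (φ e.2 - φ e.1) ^ 2) :=
            mul_le_mul_of_nonneg_left hCS hππ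
        _ = ∑ e ∈ (γ x y).toFinset, ((γ x y).length : ℝ) * π x * π y * (φ e.2 - φ e.1) ^ 2 := by
            rw [← mul_assoc, Finset.mul_sum]
            refine Finset.sum_congr rfl fun e _ => ?_
            ring
        _ = ∑ e : χ × χ, (if e ∈ (γ x y).toFinset then
              ((γ x y).length : ℝ) * π x * π y * (φ e.2 - φ e.1) ^ 2 else 0) := by
            rw [Finset.sum_ite_mem, Finset.univ_inter]
        _ = ∑ a, ∑ b, (if x ≠ y ∧ (a, b) ∈ γ x y then
              ((γ x y).length : ℝ) * π x * π y * (φ b - φ a) ^ 2 else 0) := by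
            rw [Fintype.sum_prod_type]
            refine Finset.sum_congr rfl fun a _ => Finset.sum_congr rfl fun b _ => ?_
            simp only [List.mem_toFinset]
            by_cases h : (a, b) ∈ γ x y
            · simp [h, hxy]
            · simp [h]
  -- summed Poincaré inequality
  have hT : ∀ a b : χ,
      (∑ x, ∑ y, (if x ≠ y ∧ (a, b) ∈ γ x y then ((γ x y).length : ℝ) * π x * π y else 0))
        * (φ b - φ a) ^ 2 ≤ κ * (π a * P a b * (φ a - φ b) ^ 2) := by
    intro a b
    set T := ∑ x, ∑ y, (if x ≠ y ∧ (a, b) ∈ γ x y then ((γ x y).length : ℝ) * π x * π y else 0) with hTdef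
    by_cases hab : ∃ x y : χ, x ≠ y ∧ (a, b) ∈ γ x y
    · obtain ⟨x, y, hxy, hmem'⟩ := hab
      have hPab : 0 < P a b := (hγ x y hxy).2.2.2.2.1 (a, b) hmem'
      have hQ : 0 < π a * P a b := mul_pos (hπpos a) hPab
      have hTκ : T ≤ κ * (π a * P a b) := by
        have := hκ a b hPab
        rw [inv_mul_le_iff₀ hQ] at this
        linarith [this]
      have hsq : (0:ℝ) ≤ (φ b - φ a) ^ 2 := sq_nonneg _
      calc T * (φ b - φ a) ^ 2 ≤ κ * (π a * P a b) * (φ b - φ a) ^ 2 :=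
            mul_le_mul_of_nonneg_right hTκ hsq
        _ = κ * (π a * P a b * (φ a - φ b) ^ 2) := by ring
    · have hT0 : T = 0 := by
        rw [hTdef]
        refine Finset.sum_eq_zero fun x _ => Finset.sum_eq_zero fun y _ => ?_
        rw [if_neg]
        intro ⟨h1, h2⟩
        exact hab ⟨x, y, h1, h2⟩
      rw [hT0, zero_mul]
      exact mul_nonneg hκpos.le
        (mul_nonneg (mul_nonneg (hπpos a).le (hPnonneg a b)) (sq_nonneg _))
  have hPoin : 2 * N ≤ κ * (2 * (1 - μ) * N) := by
    rw [← hV, ← hE, Finset.mul_sum]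
    calc ∑ x, ∑ y, π x * π y * (φ x - φ y) ^ 2
        ≤ ∑ x, ∑ y, ∑ a, ∑ b, (if x ≠ y ∧ (a, b) ∈ γ x y then
            ((γ x y).length : ℝ) * π x * π y * (φ b - φ a) ^ 2 else 0) :=
          Finset.sum_le_sum fun x _ => Finset.sum_le_sum fun y _ => key x y
      _ = ∑ a, ∑ b, ∑ x, ∑ y, (if x ≠ y ∧ (a, b) ∈ γ x y then
            ((γ x y).length : ℝ) * π x * π y * (φ b - φ a) ^ 2 else 0) := sum4_comm _
      _ = ∑ a, ∑ b, (∑ x, ∑ y, (if x ≠ y ∧ (a, b) ∈ γ x y then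
            ((γ x y).length : ℝ) * π x * π y else 0)) * (φ b - φ a) ^ 2 := by
          refine Finset.sum_congr rfl fun a _ => Finset.sum_congr rfl fun b _ => ?_
          rw [Finset.sum_mul]
          refine Finset.sum_congr rfl fun x _ => ?_
          rw [Finset.sum_mul]
          refine Finset.sum_congr rfl fun y _ => ?_
          split_ifs <;> simp
      _ ≤ ∑ a, ∑ b, κ * (π a * P a b * (φ a - φ b) ^ 2) :=
          Finset.sum_le_sum fun a _ => Finset.sum_le_sum fun b _ => hT a b
      _ = ∑ a, κ * ∑ b, π a * P a b * (φ a - φ b) ^ 2 := by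
          exact Finset.sum_congr rfl fun a _ => by rw [Finset.mul_sum]
  -- N > 0
  have hNpos : 0 < N := by
    obtain ⟨x, hx⟩ := Function.ne_iff.mp hφ0
    simp only [Pi.zero_apply] at hx
    refine Finset.sum_pos' (fun i _ => ?_) ⟨x, Finset.mem_univ x, ?_⟩
    · exact mul_nonneg (hπpos i).le (sq_nonneg _)
    · have h2 : 0 < φ x ^ 2 := by
        rcases lt_or_gt_of_ne hx with h | h <;> nlinarith
      exact mul_pos (hπpos x) h2
  have h1κ : 1 ≤ κ * (1 - μ) := by nlinarith
  have : 1 / κ ≤ 1 - μ := by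
    rw [div_le_iff₀ hκpos]
    linarith [h1κ]
  linarith
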